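/- For every τ ∈ {0,1}^ℕ, the set Y_τ is nonempty (equivalently, there exists a smooth bi-infinite sequence x over {1,3} with Types(x) = τ). -/

import Mathlib

open MeasureTheory Filter Topology
open scoped ENNReal

attribute [local instance] Classical.propDecidable

noncomputable section

/-- The shift map on bi-infinite sequences: `(S x) n = x (n+1)`. -/
def shift {α : Type*} (x : ℤ → α) : ℤ → α := fun n => x (n + 1)

/-- Shift by an arbitrary integer amount `m`. -/
def shiftZ {α : Type*} (m : ℤ) (x : ℤ → α) : ℤ → α := fun n => x (n + m)

/-- A run structure on a bi-infinite sequence `x`: `t k` is the starting index of the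
`k`-th maximal mono-symbol block of `x`, indexed so that block `0` contains position `0`. -/
structure RunStructure (x : ℤ → ℕ) where
  t : ℤ → ℤ
  mono : StrictMono t
  start_nonpos : t 0 ≤ 0
  start_pos : 0 < t 1
  const : ∀ k i : ℤ, t k ≤ i → i < t (k + 1) → x i = x (t k)
  alt : ∀ k : ℤ, x (t (k + 1)) ≠ x (t k)

/-- `d` is the run-length derivative of `x`: `d k` is the length of the `k`-th run. -/
def IsDelta (x d : ℤ → ℕ) : Prop :=
  ∃ r : RunStructure x, ∀ k : ℤ, (d k : ℤ) = r.t (k + 1) - r.t k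

/-- The run-length derivative operator `Δ` (junk value when no derivative exists). -/
def delta (x : ℤ → ℕ) : ℤ → ℕ :=
  if h : ∃ d, IsDelta x d then h.choose else fun _ => 0

/-- A bi-infinite sequence is smooth over `{1,3}` if all its iterated derivatives exist
and take values in `{1,3}`. -/
def SmoothSeq (x : ℤ → ℕ) : Prop :=
  ∀ k : ℕ, ∀ n : ℤ, delta^[k] x n = 1 ∨ delta^[k] x n = 3

/-- The set `X` of bi-infinite smooth sequences over `{1,3}`. -/
def SmoothX : Set (ℤ → ℕ) := {x | SmoothSeq x}

/-- The recoding alphabet: `A = 1`, `B = 3`, `C = 111`, `D = 333`. -/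
inductive ABCD : Type
  | A | B | C | D
deriving DecidableEq

instance : TopologicalSpace ABCD := ⊥
instance : DiscreteTopology ABCD := ⟨rfl⟩
instance : MeasurableSpace ABCD := ⊤

open ABCD

/-- The symbol (1 or 3) of the run encoded by a letter. -/
def sval : ABCD → ℕ
  | A => 1
  | B => 3
  | C => 1
  | D => 3

/-- The length (1 or 3) of the run encoded by a letter; this is also the value of `Δx`
at the corresponding position. -/
def lval : ABCD → ℕ
  | A => 1
  | B => 1
  | C => 3
  | D => 3

/-- `y` is the recoding of `x`: the letter `y k` encodes the `k`-th run of `x`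
(its symbol and its length). -/
def IsRecoding (x : ℤ → ℕ) (y : ℤ → ABCD) : Prop :=
  ∃ r : RunStructure x, ∀ k : ℤ,
    x (r.t k) = sval (y k) ∧ r.t (k + 1) - r.t k = (lval (y k) : ℤ)

/-- The recoding map `rec` (junk value when no recoding exists). -/
def recode (x : ℤ → ℕ) : ℤ → ABCD :=
  if h : ∃ y, IsRecoding x y then h.choose else fun _ => A

/-- The set `Y = rec(X)` of recodings of smooth sequences. -/
def SmoothY : Set (ℤ → ABCD) := recode '' SmoothX

/-- The derivative operator induced on recodings: since `(Δx) i = lval (rec x i)`,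
we have `Δ(rec x) = rec (Δ x) = recode (lval ∘ rec x)`. -/
def deltaY (y : ℤ → ABCD) : ℤ → ABCD := recode fun i => (lval (y i) : ℕ)

/-- `y` is well-aligned: the elementary block of `y` containing coordinate `0` starts
at position `0` (elementary blocks of `y` are exactly the runs of `Δx`, and
`(Δx) i = lval (y i)`). -/
def WellAligned (y : ℤ → ABCD) : Prop := lval (y (-1)) ≠ lval (y 0)

/-- `B_Y^L`: the set of `y ∈ Y` such that `y, Δy, ..., Δ^{L-1} y` are all well-aligned. -/
def BY (L : ℕ) : Set (ℤ → ABCD) :=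
  {y | y ∈ SmoothY ∧ ∀ l < L, WellAligned (deltaY^[l] y)}

/-- `Σ_y^L(n) = #{k ∈ [1,n] : S^k y ∈ B_Y^L}`. -/
def SigY (L : ℕ) (y : ℤ → ABCD) (n : ℕ) : ℕ :=
  ((Finset.Icc 1 n).filter fun k => shift^[k] y ∈ BY L).card

/-- `y` contains an elementary block in `{ABA, DCD}` (for `y ∈ Y`, any such factor is
automatically an elementary block). -/
def HasType0 (y : ℤ → ABCD) : Prop :=
  ∃ i : ℤ, (y i = A ∧ y (i + 1) = B ∧ y (i + 2) = A) ∨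
           (y i = D ∧ y (i + 1) = C ∧ y (i + 2) = D)

/-- `y` contains an elementary block in `{BAB, CDC}`. -/
def HasType1 (y : ℤ → ABCD) : Prop :=
  ∃ i : ℤ, (y i = B ∧ y (i + 1) = A ∧ y (i + 2) = B) ∨
           (y i = C ∧ y (i + 1) = D ∧ y (i + 2) = C)

/-- The type of a recoded sequence: `false` = type 0, `true` = type 1. -/
def typeOf (y : ℤ → ABCD) : Bool := decide (HasType1 y)

/-- The sequence of types of the successive derivatives of a smooth sequence `x`. -/
def TypesX (x : ℤ → ℕ) : ℕ → Bool := fun n => typeOf (recode (delta^[n] x))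

/-- The sequence of types of the successive derivatives of a recoded sequence `y`. -/
def TypesY (y : ℤ → ABCD) : ℕ → Bool := fun n => typeOf (deltaY^[n] y)

/-- `X_τ`: smooth bi-infinite sequences whose type sequence is exactly `τ`. -/
def Xset (τ : ℕ → Bool) : Set (ℤ → ℕ) := {x ∈ SmoothX | TypesX x = τ}

/-- `Y_τ = rec(X_τ)`. -/
def Yset (τ : ℕ → Bool) : Set (ℤ → ABCD) := recode '' Xset τ

/-- A sequence over `{A,B,C,D}` is alternating: no two consecutive symbols in `{A,C}`
and no two consecutive symbols in `{B,D}`. -/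
def Alternating (y : ℤ → ABCD) : Prop := ∀ n : ℤ, sval (y n) ≠ sval (y (n + 1))

/-- The substitutions `φ₀` and `φ₁` on letters. -/
def phiW : Bool → ABCD → List ABCD
  | false, A => [A]
  | false, B => [D]
  | false, C => [A, B, A]
  | false, D => [D, C, D]
  | true, A => [B]
  | true, B => [C]
  | true, C => [B, A, B]
  | true, D => [C, D, C]

/-- `z` is the image of the bi-infinite sequence `y` under the substitution `φ_t`, with
the convention that the image of the letter at position `0` starts at position `0`. -/
def IsSubst (t : Bool) (y z : ℤ → ABCD) : Prop :=
  ∃ u : ℤ → ℤ, u 0 = 0 ∧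
    (∀ k : ℤ, u (k + 1) = u k + (phiW t (y k)).length) ∧
    (∀ k : ℤ, ∀ j : Fin (phiW t (y k)).length, z (u k + (j : ℕ)) = (phiW t (y k)).get j)

/-- The substitution `φ_t` on bi-infinite sequences. -/
def substF (t : Bool) (y : ℤ → ABCD) : ℤ → ABCD :=
  if h : ∃ z, IsSubst t y z then h.choose else y

/-- The composition `φ_{τ₀} ∘ φ_{τ₁} ∘ ⋯ ∘ φ_{τ_{L-1}}`. -/
def substComp (τ : ℕ → Bool) : ℕ → (ℤ → ABCD) → (ℤ → ABCD)
  | 0 => id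
  | L + 1 => substF (τ 0) ∘ substComp (fun n => τ (n + 1)) L

/-- The homographies `h₀` and `h₁`. -/
def hmap : Bool → ℝ × ℝ → ℝ × ℝ
  | false, p => ((1 - p.1) / (3 - 2 * (p.1 + p.2)), (1 / 2 - p.1) / (3 - 2 * (p.1 + p.2)))
  | true, p => ((1 / 2 - p.1) / (3 - 2 * (p.1 + p.2)), (1 - p.1) / (3 - 2 * (p.1 + p.2)))

/-- The square `K = [0,1/2] × [0,1/2]`. -/
def Ksq : Set (ℝ × ℝ) := Set.Icc (0 : ℝ) (1 / 2) ×ˢ Set.Icc (0 : ℝ) (1 / 2)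

/-- The domain `E = {(a,b) ∈ K : a + b ≤ 3/4}`. -/
def Eset : Set (ℝ × ℝ) := {p ∈ Ksq | p.1 + p.2 ≤ 3 / 4}

/-- The composition `h_{t₀} ∘ h_{t₁} ∘ ⋯ ∘ h_{t_L}`. -/
def hComp (t : ℕ → Bool) : ℕ → (ℝ × ℝ → ℝ × ℝ)
  | 0 => hmap (t 0)
  | L + 1 => hComp t L ∘ hmap (t (L + 1))

/-- The point `(a(t), b(t))`, unique point of `⋂_L (h_{t₀} ∘ ⋯ ∘ h_{t_L})(E)`. -/
def abPoint (t : ℕ → Bool) : ℝ × ℝ :=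
  if h : ∃ p : ℝ × ℝ, (⋂ L : ℕ, hComp t L '' Eset) = {p} then h.choose else 0

/-- The number of occurrences of the letter `s` among positions `1, ..., m` of `z`. -/
def letterCount (s : ABCD) (z : ℤ → ABCD) (m : ℕ) : ℕ :=
  ((Finset.Icc 1 m).filter fun k => z (k : ℤ) = s).card

/-- `w` occurs as a factor of `y` at position `i`. -/
def IsFactorAt (w : List ABCD) (y : ℤ → ABCD) (i : ℤ) : Prop :=
  ∀ j : Fin w.length, y (i + (j : ℕ)) = w.get j

/-- The cylinder set `[w]` in `{1,3}^ℤ`. -/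
def cylX (w : List ℕ) : Set (ℤ → ℕ) :=
  {x | ∀ j : Fin w.length, x ((j : ℕ) : ℤ) = w.get j}

/-- The cylinder set `[w]` in `{A,B,C,D}^ℤ`. -/
def cylY (w : List ABCD) : Set (ℤ → ABCD) :=
  {y | ∀ j : Fin w.length, y ((j : ℕ) : ℤ) = w.get j}

/-- The number of occurrences of the finite word `w` in the prefix `x₀ ⋯ x_{n-1}`. -/
def occCount (x : ℤ → ℕ) (w : List ℕ) (n : ℕ) : ℕ :=
  ((Finset.range n).filter fun i =>
    i + w.length ≤ n ∧ ∀ j : Fin w.length, x (((i + (j : ℕ) : ℕ)) : ℤ) = w.get j).card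

/-- A subshift `Z` is minimal if it contains no nonempty proper closed shift-invariant
subset. -/
def ShiftMinimal {α : Type*} [TopologicalSpace α] (Z : Set (ℤ → α)) : Prop :=
  ∀ W : Set (ℤ → α), W ⊆ Z → W.Nonempty → IsClosed W → shift '' W = W → W = Z

namespace Stmt7
open ABCD

lemma phiW_ne_nil (t : Bool) (c : ABCD) : phiW t c ≠ [] := by
  cases t <;> cases c <;> simp [phiW]

lemma phiW_length (t : Bool) (c : ABCD) : (phiW t c).length = lval c := by
  cases t <;> cases c <;> rfl

lemma lval_mem_phiW (t : Bool) (c : ABCD) : ∀ a ∈ phiW t c, lval a = sval c := by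
  cases t <;> cases c <;> simp [phiW, lval, sval]

lemma abcd_ext {c c' : ABCD} (h1 : sval c = sval c') (h2 : lval c = lval c') : c = c' := by
  cases c <;> cases c' <;> simp_all [sval, lval]

lemma strictMono_int_le {t : ℤ → ℤ} (h : StrictMono t) (a : ℤ) (n : ℕ) :
    t a + n ≤ t (a + n) := by
  induction n with
  | zero => simp
  | succ n ih =>
    have h2 : t (a + n) < t (a + n + 1) := h (by omega)
    have : a + n + 1 = a + (n+1 : ℕ) := by push_cast; ring
    rw [this] at h2
    push_cast at h2 ih ⊢
    omega

lemma exists_block {t : ℤ → ℤ} (h : StrictMono t) (i : ℤ) :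
    ∃ k, t k ≤ i ∧ i < t (k + 1) := by
  have hinh : ∃ k, t k ≤ i := by
    refine ⟨0 - ((t 0 - i).toNat : ℤ), ?_⟩
    have := strictMono_int_le h (0 - ((t 0 - i).toNat : ℤ)) (t 0 - i).toNat
    have h0 : (0 - ((t 0 - i).toNat : ℤ)) + ((t 0 - i).toNat : ℤ) = 0 := by ring
    rw [h0] at this
    have : t (0 - ((t 0 - i).toNat : ℤ)) ≤ t 0 - (t 0 - i).toNat := by omega
    have h1 : (t 0 - i) ≤ ((t 0 - i).toNat : ℤ) := Int.self_le_toNat _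
    omega
  have hbdd : ∃ b : ℤ, ∀ k, t k ≤ i → k ≤ b := by
    refine ⟨max 0 (i - t 0), fun k hk => ?_⟩
    rcases le_or_gt k 0 with hk0 | hk0
    · exact le_trans hk0 (le_max_left _ _)
    · have := strictMono_int_le h 0 k.toNat
      rw [Int.toNat_of_nonneg hk0.le] at this
      simp at this
      have : k ≤ i - t 0 := by omega
      exact le_trans this (le_max_right _ _)
  obtain ⟨k, hk, hmax⟩ := Int.exists_greatest_of_bdd hbdd hinh
  refine ⟨k, hk, ?_⟩
  by_contra hc
  push_neg at hc
  have := hmax (k+1) hc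
  omega

variable {x : ℤ → ℕ}

lemma is_break_iff (r : RunStructure x) (b : ℤ) : (∃ k, b = r.t k) ↔ x b ≠ x (b - 1) := by
  constructor
  · rintro ⟨k, rfl⟩
    have h1 : r.t (k - 1) ≤ r.t k - 1 := by
      have := r.mono (show k - 1 < k by omega); omega
    have h2 : r.t k - 1 < r.t (k - 1 + 1) := by
      have : k - 1 + 1 = k := by ring
      rw [this]; omega
    have hc := r.const (k-1) (r.t k - 1) h1 h2
    have ha := r.alt (k-1)
    have : k - 1 + 1 = k := by ring
    rw [this] at ha h2
    rw [hc]; exact ha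
  · intro hb
    obtain ⟨k, hk1, hk2⟩ := exists_block r.mono b
    rcases eq_or_lt_of_le hk1 with he | hlt
    · exact ⟨k, he.symm⟩
    · exfalso
      have h1 := r.const k b hk1 hk2
      have h2 := r.const k (b-1) (by omega) (by omega)
      rw [h1, h2] at hb
      exact hb rfl

lemma t_one_eq (r r' : RunStructure x) : r.t 1 = r'.t 1 := by
  have key : ∀ (s s' : RunStructure x), s.t 1 ≤ s'.t 1 := by
    intro s s'
    have hb : (∃ k, s'.t 1 = s.t k) := by
      rw [is_break_iff s]
      rw [← is_break_iff s']
      exact ⟨1, rfl⟩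
    obtain ⟨j, hj⟩ := hb
    have hj1 : 1 ≤ j := by
      by_contra hc
      push_neg at hc
      have : s.t j ≤ s.t 0 := s.mono.monotone (by omega)
      have := s.start_nonpos
      have := s'.start_pos
      omega
    have := s.mono.monotone hj1
    omega
  exact le_antisymm (key r r') (key r' r)

lemma t_step_up (r r' : RunStructure x) (k : ℤ) (h : r.t k = r'.t k) :
    r.t (k + 1) = r'.t (k + 1) := by
  have key : ∀ (s s' : RunStructure x), s.t k = s'.t k → s.t (k+1) ≤ s'.t (k+1) := by
    intro s s' hss
    have hb : (∃ j, s'.t (k+1) = s.t j) := by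
      rw [is_break_iff s, ← is_break_iff s']
      exact ⟨k+1, rfl⟩
    obtain ⟨j, hj⟩ := hb
    have hj1 : k + 1 ≤ j := by
      by_contra hc
      push_neg at hc
      have h1 : s.t j ≤ s.t k := s.mono.monotone (by omega)
      have h2 : s'.t k < s'.t (k+1) := s'.mono (by omega)
      omega
    have := s.mono.monotone hj1
    omega
  exact le_antisymm (key r r' h) (key r' r h.symm)

lemma t_step_down (r r' : RunStructure x) (k : ℤ) (h : r.t (k + 1) = r'.t (k + 1)) :
    r.t k = r'.t k := by
  have key : ∀ (s s' : RunStructure x), s.t (k+1) = s'.t (k+1) → s'.t k ≤ s.t k := by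
    intro s s' hss
    have hb : (∃ j, s'.t k = s.t j) := by
      rw [is_break_iff s, ← is_break_iff s']
      exact ⟨k, rfl⟩
    obtain ⟨j, hj⟩ := hb
    have hj1 : j ≤ k := by
      by_contra hc
      push_neg at hc
      have h1 : s.t (k+1) ≤ s.t j := s.mono.monotone (by omega)
      have h2 : s'.t k < s'.t (k+1) := s'.mono (by omega)
      omega
    have := s.mono.monotone hj1
    omega
  exact le_antisymm (key r' r h.symm) (key r r' h)

lemma t_unique (r r' : RunStructure x) : ∀ k, r.t k = r'.t k := by
  have up : ∀ n : ℕ, r.t (1 + n) = r'.t (1 + n) := by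
    intro n
    induction n with
    | zero => simpa using t_one_eq r r'
    | succ n ih =>
      have := t_step_up r r' (1 + n) ih
      have he : (1 : ℤ) + (n + 1 : ℕ) = 1 + (n : ℤ) + 1 := by push_cast; ring
      rw [he]
      exact this
  have down : ∀ n : ℕ, r.t (1 - n) = r'.t (1 - n) := by
    intro n
    induction n with
    | zero => simpa using t_one_eq r r'
    | succ n ih =>
      have he : (1 : ℤ) - (n : ℕ) = 1 - ((n+1 : ℕ) : ℤ) + 1 := by push_cast; ring
      rw [he] at ih
      exact t_step_down r r' _ ih
  intro k
  rcases le_or_gt 1 k with hk | hk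
  · have := up (k - 1).toNat
    have he : (1 : ℤ) + ((k-1).toNat : ℤ) = k := by
      rw [Int.toNat_of_nonneg (by omega)]; ring
    rwa [he] at this
  · have := down (1 - k).toNat
    have he : (1 : ℤ) - ((1-k).toNat : ℤ) = k := by
      rw [Int.toNat_of_nonneg (by omega)]; ring
    rwa [he] at this

lemma isDelta_unique {d d' : ℤ → ℕ} (h : IsDelta x d) (h' : IsDelta x d') : d = d' := by
  obtain ⟨r, hr⟩ := h
  obtain ⟨r', hr'⟩ := h'
  funext k
  have h1 := hr k
  have h2 := hr' k
  have e1 := t_unique r r' k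
  have e2 := t_unique r r' (k+1)
  have : (d k : ℤ) = (d' k : ℤ) := by omega
  exact_mod_cast this

lemma delta_eq {d : ℤ → ℕ} (h : IsDelta x d) : delta x = d := by
  have hex : ∃ d, IsDelta x d := ⟨d, h⟩
  rw [delta, dif_pos hex]
  exact isDelta_unique hex.choose_spec h

lemma isRecoding_unique {y y' : ℤ → ABCD} (h : IsRecoding x y) (h' : IsRecoding x y') :
    y = y' := by
  obtain ⟨r, hr⟩ := h
  obtain ⟨r', hr'⟩ := h'
  funext k
  obtain ⟨hs, hl⟩ := hr k
  obtain ⟨hs', hl'⟩ := hr' k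
  have e1 := t_unique r r' k
  have e2 := t_unique r r' (k+1)
  refine abcd_ext ?_ ?_
  · rw [← hs, ← hs', e1]
  · have : (lval (y k) : ℤ) = lval (y' k) := by omega
    exact_mod_cast this

lemma recode_eq {y : ℤ → ABCD} (h : IsRecoding x y) : recode x = y := by
  have hex : ∃ y, IsRecoding x y := ⟨y, h⟩
  rw [recode, dif_pos hex]
  exact isRecoding_unique hex.choose_spec h

lemma isRecoding_isDelta {y : ℤ → ABCD} (h : IsRecoding x y) :
    IsDelta x (fun k => lval (y k)) := by
  obtain ⟨r, hr⟩ := h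
  refine ⟨r, fun k => ?_⟩
  have := (hr k).2
  simp only []
  omega

end Stmt7
namespace Stmt7
open ABCD List

/-! ### Words and substitutions -/

def substW (t : Bool) (w : List ABCD) : List ABCD := w.flatMap (phiW t)

lemma substW_append (t : Bool) (w₁ w₂ : List ABCD) :
    substW t (w₁ ++ w₂) = substW t w₁ ++ substW t w₂ := by
  simp [substW]

lemma substW_nil (t : Bool) : substW t [] = [] := rfl

lemma substW_ne_nil (t : Bool) {w : List ABCD} (h : w ≠ []) : substW t w ≠ [] := by
  cases w with
  | nil => exact absurd rfl h
  | cons c w =>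
    have : substW t (c :: w) = phiW t c ++ substW t w := by simp [substW]
    rw [this]
    simp [phiW_ne_nil]

lemma length_le_substW (t : Bool) (w : List ABCD) : w.length ≤ (substW t w).length := by
  induction w with
  | nil => simp [substW]
  | cons c w ih =>
    have : substW t (c :: w) = phiW t c ++ substW t w := by simp [substW]
    rw [this]
    have h1 : 1 ≤ (phiW t c).length :=
      List.length_pos_iff.2 (phiW_ne_nil t c)
    simp only [length_append, length_cons]
    omega

variable (tt : ℕ → Bool)

def EW : ℕ → ℕ → List ABCD → List ABCD
  | _, 0, w => w
  | L, g+1, w => substW (tt L) (EW (L+1) g w)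

lemma EW_append (L g : ℕ) (w₁ w₂ : List ABCD) :
    EW tt L g (w₁ ++ w₂) = EW tt L g w₁ ++ EW tt L g w₂ := by
  induction g generalizing L with
  | zero => rfl
  | succ g ih => simp [EW, ih, substW_append]

lemma EW_ne_nil (L g : ℕ) {w : List ABCD} (h : w ≠ []) : EW tt L g w ≠ [] := by
  induction g generalizing L with
  | zero => exact h
  | succ g ih => exact substW_ne_nil _ (ih (L+1))

lemma EW_length_le (L g : ℕ) (w : List ABCD) : w.length ≤ (EW tt L g w).length := by
  induction g generalizing L with
  | zero => exact le_refl _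
  | succ g ih => exact le_trans (ih (L+1)) (length_le_substW _ _)

lemma EW_succ_inner (L g : ℕ) (w : List ABCD) :
    EW tt L (g+1) w = EW tt L g (substW (tt (L+g)) w) := by
  induction g generalizing L w with
  | zero => simp [EW]
  | succ g ih =>
    show substW (tt L) (EW tt (L+1) (g+1) w) = substW (tt L) (EW tt (L+1) g _)
    rw [ih (L+1) w]
    have e : L + 1 + g = L + (g+1) := by omega
    rw [e]

/-! ### The marked D-words -/

def posn (L : ℕ) : ℕ := if tt L then 1 else (if L % 2 = 0 then 0 else 2)

def preW (L : ℕ) : List ABCD := (phiW (tt L) D).take (posn tt L)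
def sufW (L : ℕ) : List ABCD := (phiW (tt L) D).drop (posn tt L + 1)

lemma seed_split (L : ℕ) : phiW (tt L) D = preW tt L ++ [D] ++ sufW tt L := by
  by_cases h : tt L <;> by_cases h2 : L % 2 = 0 <;>
    simp [preW, sufW, posn, h, h2, phiW]

lemma preW_length (L : ℕ) : (preW tt L).length = posn tt L := by
  by_cases h : tt L <;> by_cases h2 : L % 2 = 0 <;>
    simp [preW, posn, h, h2, phiW]

def WD (L g : ℕ) : List ABCD := EW tt L g [D]

def aoff : ℕ → ℕ → ℕ
  | L, 0 => 0
  | L, g+1 => (EW tt L g (preW tt (L+g))).length + aoff L g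

lemma WD_succ (L g : ℕ) :
    WD tt L (g+1) = EW tt L g (preW tt (L+g)) ++ WD tt L g ++ EW tt L g (sufW tt (L+g)) := by
  show EW tt L (g+1) [D] = _
  rw [EW_succ_inner]
  have : substW (tt (L+g)) [D] = phiW (tt (L+g)) D := by simp [substW]
  rw [this, seed_split tt (L+g)]
  rw [EW_append, EW_append]
  rfl

lemma aoff_lt (L g : ℕ) : aoff tt L g < (WD tt L g).length := by
  induction g with
  | zero => simp [aoff, WD, EW]
  | succ g ih =>
    rw [WD_succ, aoff]
    simp only [length_append]
    omega

lemma aoff_mono (L g : ℕ) : aoff tt L g ≤ aoff tt L (g+1) := by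
  rw [aoff]; omega

def rmar (L g : ℕ) : ℕ := (WD tt L g).length - aoff tt L g

lemma rmar_pos (L g : ℕ) : 1 ≤ rmar tt L g := by
  have := aoff_lt tt L g; unfold rmar; omega

lemma rmar_mono (L g : ℕ) : rmar tt L g ≤ rmar tt L (g+1) := by
  unfold rmar
  rw [WD_succ, aoff]
  simp only [length_append]
  omega

lemma preW_ne_nil_of (L : ℕ) (h : 1 ≤ posn tt L) : preW tt L ≠ [] := by
  have := preW_length tt L
  intro hc
  rw [hc] at this
  simp at this
  omega

lemma sufW_ne_nil_of (L : ℕ) (h : posn tt L ≤ 1) : sufW tt L ≠ [] := by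
  have h3 : (phiW (tt L) D).length = 3 := by cases htt : tt L <;> simp [phiW]
  have : (sufW tt L).length = 3 - (posn tt L + 1) := by
    simp [sufW, h3]
  intro hc
  rw [hc] at this
  simp at this
  omega

lemma posn_pair_left (M : ℕ) : 1 ≤ posn tt M ∨ 1 ≤ posn tt (M+1) := by
  by_cases h1 : tt M
  · left; simp [posn, h1]
  · by_cases h2 : tt (M+1)
    · right; simp [posn, h2]
    · by_cases h3 : M % 2 = 0
      · have h4 : ¬((M+1) % 2 = 0) := by omega
        right; simp [posn, h2, h4]
      · left; simp [posn, h1, h3]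

lemma posn_pair_right (M : ℕ) : posn tt M ≤ 1 ∨ posn tt (M+1) ≤ 1 := by
  by_cases h1 : tt M
  · left; simp [posn, h1]
  · by_cases h2 : tt (M+1)
    · right; simp [posn, h2]
    · by_cases h3 : M % 2 = 0
      · left; simp [posn, h1, h3]
      · have h4 : (M+1) % 2 = 0 := by omega
        right; simp [posn, h2, h4]

lemma aoff_grow (L g : ℕ) : aoff tt L g + 1 ≤ aoff tt L (g+2) := by
  have key : ∀ M, 1 ≤ posn tt M ∨ 1 ≤ posn tt (M+1) := posn_pair_left tt
  have e2 : aoff tt L (g+2) = (EW tt L (g+1) (preW tt (L+g+1))).length + aoff tt L (g+1) := by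
    have : L + (g+1) = L + g + 1 := by omega
    rw [aoff, this]
  have e1 : aoff tt L (g+1) = (EW tt L g (preW tt (L+g))).length + aoff tt L g := rfl
  rcases key (L+g) with h | h
  · have : 1 ≤ (EW tt L g (preW tt (L+g))).length :=
      List.length_pos_iff.2 (EW_ne_nil tt L g (preW_ne_nil_of tt (L+g) h))
    omega
  · have : 1 ≤ (EW tt L (g+1) (preW tt (L+g+1))).length :=
      List.length_pos_iff.2 (EW_ne_nil tt L (g+1) (preW_ne_nil_of tt (L+g+1) h))
    omega

lemma rmar_grow (L g : ℕ) : rmar tt L g + 1 ≤ rmar tt L (g+2) := by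
  have key : ∀ M, posn tt M ≤ 1 ∨ posn tt (M+1) ≤ 1 := posn_pair_right tt
  have e1 : rmar tt L (g+1) = rmar tt L g + (EW tt L g (sufW tt (L+g))).length := by
    unfold rmar
    rw [WD_succ, aoff]
    simp only [length_append]
    have := aoff_lt tt L g
    omega
  have e2 : rmar tt L (g+2) = rmar tt L (g+1) + (EW tt L (g+1) (sufW tt (L+g+1))).length := by
    unfold rmar
    have hLg : L + (g+1) = L + g + 1 := by omega
    conv_lhs => rw [show g + 2 = (g+1)+1 from rfl, WD_succ, aoff]
    simp only [length_append, hLg]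
    have := aoff_lt tt L (g+1)
    unfold rmar at *
    omega
  rcases key (L+g) with h | h
  · have : 1 ≤ (EW tt L g (sufW tt (L+g))).length :=
      List.length_pos_iff.2 (EW_ne_nil tt L g (sufW_ne_nil_of tt (L+g) h))
    omega
  · have : 1 ≤ (EW tt L (g+1) (sufW tt (L+g+1))).length :=
      List.length_pos_iff.2 (EW_ne_nil tt L (g+1) (sufW_ne_nil_of tt (L+g+1) h))
    omega

lemma aoff_big (L k : ℕ) : k ≤ aoff tt L (2*k) := by
  induction k with
  | zero => simp
  | succ k ih =>
    have := aoff_grow tt L (2*k)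
    have : 2 * (k+1) = 2*k + 2 := by omega
    rw [this]
    have := aoff_grow tt L (2*k)
    omega

lemma rmar_big (L k : ℕ) : k + 1 ≤ rmar tt L (2*k) := by
  induction k with
  | zero => exact rmar_pos tt L 0
  | succ k ih =>
    have h := rmar_grow tt L (2*k)
    have e : 2 * (k+1) = 2*k + 2 := by omega
    rw [e]
    omega

/-! ### The limit sequences -/

def InR (L g : ℕ) (n : ℤ) : Prop :=
  0 ≤ n + aoff tt L g ∧ n + aoff tt L g < (WD tt L g).length

def MM (L : ℕ) (n : ℤ) : ABCD :=
  (WD tt L (2 * (n.natAbs + 1))).getD (n + aoff tt L (2 * (n.natAbs + 1))).toNat A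

lemma InR_can (L : ℕ) (n : ℤ) : InR tt L (2 * (n.natAbs + 1)) n := by
  constructor
  · have := aoff_big tt L (n.natAbs + 1)
    have : (n.natAbs : ℤ) + 1 ≤ aoff tt L (2 * (n.natAbs + 1)) := by exact_mod_cast this
    omega
  · have := rmar_big tt L (n.natAbs + 1)
    unfold rmar at this
    have ha := aoff_lt tt L (2 * (n.natAbs + 1))
    omega

lemma InR_succ (L g : ℕ) (n : ℤ) (h : InR tt L g n) : InR tt L (g+1) n := by
  obtain ⟨h1, h2⟩ := h
  constructor
  · have := aoff_mono tt L g; omega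
  · have hm := rmar_mono tt L g
    unfold rmar at hm
    have := aoff_lt tt L g
    have := aoff_lt tt L (g+1)
    omega

lemma MM_stable_succ (L g : ℕ) (n : ℤ) (h : InR tt L g n) :
    (WD tt L (g+1)).getD (n + aoff tt L (g+1)).toNat A
      = (WD tt L g).getD (n + aoff tt L g).toNat A := by
  obtain ⟨h1, h2⟩ := h
  rw [WD_succ, aoff]
  have e : (n + ((EW tt L g (preW tt (L+g))).length + aoff tt L g : ℕ)).toNat
      = (EW tt L g (preW tt (L+g))).length + (n + aoff tt L g).toNat := by omega
  rw [e]
  rw [append_assoc]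
  rw [getD_append_right _ _ _ _ (by omega)]
  have e2 : (EW tt L g (preW tt (L + g))).length + (n + (aoff tt L g : ℤ)).toNat
      - (EW tt L g (preW tt (L + g))).length = (n + (aoff tt L g : ℤ)).toNat := by omega
  rw [e2]
  rw [getD_append _ _ _ _ (by omega)]

lemma MM_stable (L g : ℕ) (n : ℤ) (h : InR tt L g n) :
    MM tt L n = (WD tt L g).getD (n + aoff tt L g).toNat A := by
  have step : ∀ d g', InR tt L g' n →
      (WD tt L (g'+d)).getD (n + aoff tt L (g'+d)).toNat A
        = (WD tt L g').getD (n + aoff tt L g').toNat A := by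
    intro d
    induction d with
    | zero => intro g' _; rfl
    | succ d ih =>
      intro g' hg'
      have e : g' + (d+1) = (g'+d) + 1 := by omega
      rw [e]
      have hInd : InR tt L (g'+d) n := by
        clear ih e
        induction d with
        | zero => exact hg'
        | succ d ih2 =>
          have := InR_succ tt L (g'+d) n ih2
          have e2 : g' + (d+1) = (g'+d)+1 := by omega
          rwa [e2]
      rw [MM_stable_succ tt L (g'+d) n hInd]
      exact ih g' hg'
  set G := 2 * (n.natAbs + 1) with hG
  rcases le_total g G with hle | hle
  · have := step (G - g) g h
    have e : g + (G - g) = G := by omega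
    rw [e] at this
    rw [MM, ← hG, this]
  · have := step (g - G) G (InR_can tt L n)
    have e : G + (g - G) = g := by omega
    rw [e] at this
    rw [MM, ← hG, ← this]

end Stmt7
namespace Stmt7
open ABCD List

def AltR (a b : ABCD) : Prop := sval a ≠ sval b

lemma sval_cases (c : ABCD) : sval c = 1 ∨ sval c = 3 := by cases c <;> simp [sval]

lemma lval_cases (c : ABCD) : lval c = 1 ∨ lval c = 3 := by cases c <;> simp [lval]

def tval (t : Bool) (v : ℕ) : ℕ := if t then 4 - v else v

lemma phiW_head (t : Bool) (c : ABCD) :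
    ∃ h rest, phiW t c = h :: rest ∧ sval h = tval t (sval c) := by
  cases t <;> cases c <;> exact ⟨_, _, rfl, rfl⟩

lemma phiW_last (t : Bool) (c : ABCD) :
    ∃ w h, phiW t c = w ++ [h] ∧ sval h = tval t (sval c) := by
  cases t <;> cases c
  · exact ⟨[], A, rfl, rfl⟩
  · exact ⟨[], D, rfl, rfl⟩
  · exact ⟨[A, B], A, rfl, rfl⟩
  · exact ⟨[D, C], D, rfl, rfl⟩
  · exact ⟨[], B, rfl, rfl⟩
  · exact ⟨[], C, rfl, rfl⟩
  · exact ⟨[B, A], B, rfl, rfl⟩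
  · exact ⟨[C, D], C, rfl, rfl⟩

lemma tval_ne (t : Bool) {v v' : ℕ} (hv : v = 1 ∨ v = 3) (hv' : v' = 1 ∨ v' = 3)
    (h : v ≠ v') : tval t v ≠ tval t v' := by
  cases t <;> simp [tval] <;> omega

lemma chain'_phiW (t : Bool) (c : ABCD) : List.Chain' AltR (phiW t c) := by
  cases t <;> cases c <;> simp [phiW, AltR, List.isChain_cons_cons, sval, List.Chain']

lemma chain'_substW (t : Bool) : ∀ {w : List ABCD}, List.Chain' AltR w →
    List.Chain' AltR (substW t w) := by
  intro w
  induction w with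
  | nil => intro _; simp [substW, List.Chain']
  | cons c w ih =>
    intro h
    have hsw : substW t (c :: w) = phiW t c ++ substW t w := by simp [substW]
    rw [hsw]; show List.IsChain _ _; rw [isChain_append]
    refine ⟨chain'_phiW t c, ih (List.IsChain.tail h), ?_⟩
    intro a ha b hb
    cases w with
    | nil => simp [substW] at hb
    | cons c' w' =>
      have hcc' : AltR c c' := (List.isChain_cons_cons.1 h).1
      obtain ⟨wl, hl, hwl, hsl⟩ := phiW_last t c
      obtain ⟨hh, rest, hwh, hsh⟩ := phiW_head t c'
      have ha' : a = hl := by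
        rw [hwl] at ha
        simp [List.getLast?_append] at ha
        exact ha.symm
      have hb' : b = hh := by
        have : substW t (c' :: w') = phiW t c' ++ substW t w' := by simp [substW]
        rw [this, hwh] at hb
        simp at hb
        exact hb.symm
      rw [ha', hb']
      rw [AltR] at hcc' ⊢
      rw [hsl, hsh]
      exact tval_ne t (sval_cases c) (sval_cases c') hcc'

lemma chain'_WD (tt : ℕ → Bool) : ∀ (g L : ℕ), List.Chain' AltR (WD tt L g) := by
  intro g
  induction g with
  | zero => intro L; simp [WD, EW, List.Chain']
  | succ g ih =>
    intro L
    have : WD tt L (g+1) = substW (tt L) (WD tt (L+1) g) := rfl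
    rw [this]
    exact chain'_substW _ (ih (L+1))

lemma InR_big (tt : ℕ → Bool) (L k : ℕ) (n : ℤ) (h : n.natAbs + 1 ≤ k) :
    InR tt L (2*k) n := by
  have h1 := aoff_big tt L k
  have h2 := rmar_big tt L k
  have h3 := aoff_lt tt L (2*k)
  unfold rmar at h2
  constructor
  · omega
  · omega

lemma MM_alt (tt : ℕ → Bool) (L : ℕ) (n : ℤ) :
    sval (MM tt L n) ≠ sval (MM tt L (n + 1)) := by
  set g := 2 * (n.natAbs + 2) with hg
  have h1 : InR tt L g n := InR_big tt L _ n (by omega)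
  have h2 : InR tt L g (n+1) := InR_big tt L _ (n+1) (by omega)
  obtain ⟨h1a, h1b⟩ := h1
  rw [MM_stable tt L g n ⟨h1a, h1b⟩, MM_stable tt L g (n+1) h2]
  have e : ((n + 1) + (aoff tt L g : ℤ)).toNat = (n + aoff tt L g).toNat + 1 := by omega
  rw [e]
  set i := (n + (aoff tt L g : ℤ)).toNat with hi
  have hlt : i + 1 < (WD tt L g).length := by
    obtain ⟨_, hb⟩ := h2
    omega
  have hc := (List.isChain_iff_getElem.1 (chain'_WD tt g L)) i (by omega)
  rw [getD_eq_getElem _ _ (by omega), getD_eq_getElem _ _ (by omega)]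
  simpa [AltR, List.get_eq_getElem] using hc

end Stmt7
namespace Stmt7
open ABCD List

def Fits (t : Bool) (y z : ℤ → ABCD) (u : ℤ → ℤ) : Prop :=
  (∀ k : ℤ, u (k+1) = u k + ((phiW t (y k)).length : ℤ)) ∧
  (∀ k : ℤ, ∀ j : ℕ, j < (phiW t (y k)).length → z (u k + j) = (phiW t (y k)).getD j A)

def intSum (f : ℤ → ℤ) (k : ℤ) : ℤ :=
  if 0 ≤ k then ∑ j ∈ Finset.range k.toNat, f j
  else -∑ j ∈ Finset.range (-k).toNat, f (k + j)

lemma intSum_zero (f : ℤ → ℤ) : intSum f 0 = 0 := by simp [intSum]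

lemma intSum_succ (f : ℤ → ℤ) (k : ℤ) : intSum f (k + 1) = intSum f k + f k := by
  rcases le_or_gt 0 k with hk | hk
  · rw [intSum, intSum, if_pos (by omega : (0:ℤ) ≤ k + 1), if_pos hk]
    have e : (k+1).toNat = k.toNat + 1 := by omega
    rw [e, Finset.sum_range_succ]
    congr 2
    omega
  · rcases eq_or_lt_of_le (by omega : k + 1 ≤ 0) with he | hlt
    · rw [intSum, intSum, if_pos (by omega), if_neg (by omega)]
      have hk1 : k = -1 := by omega
      subst hk1
      simp
    · rw [intSum, intSum, if_neg (by omega), if_neg (by omega)]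
      have e : (-k).toNat = (-(k+1)).toNat + 1 := by omega
      rw [e, Finset.sum_range_succ']
      have e2 : ∀ j : ℕ, f (k + ((j + 1 : ℕ) : ℤ)) = f (k + 1 + (j : ℤ)) := by
        intro j; congr 1; push_cast; ring
      rw [Finset.sum_congr rfl (fun j _ => e2 j)]
      norm_num

variable (tt : ℕ → Bool)

def uu (L : ℕ) (k : ℤ) : ℤ :=
  intSum (fun j => ((phiW (tt L) (MM tt (L+1) j)).length : ℤ)) k - posn tt L

lemma uu_zero (L : ℕ) : uu tt L 0 = -(posn tt L) := by
  rw [uu, intSum_zero]; ring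

lemma uu_succ (L : ℕ) (k : ℤ) :
    uu tt L (k+1) = uu tt L k + ((phiW (tt L) (MM tt (L+1) k)).length : ℤ) := by
  rw [uu, uu, intSum_succ]; ring

lemma key1 : ∀ (g L : ℕ), aoff tt L (g+1)
    = (substW (tt L) ((WD tt (L+1) g).take (aoff tt (L+1) g))).length + posn tt L := by
  intro g
  induction g with
  | zero =>
    intro L
    show (EW tt L 0 (preW tt (L+0))).length + aoff tt L 0 = _
    simp [EW, aoff, WD, preW_length, substW]
  | succ g ih =>
    intro L
    have e1 : aoff tt L (g+2) = (EW tt L (g+1) (preW tt (L+(g+1)))).length + aoff tt L (g+1) := rfl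
    rw [e1, ih L]
    -- left side EW-term is substW (tt L) applied to EW (L+1) g of preW
    have e2 : EW tt L (g+1) (preW tt (L+(g+1))) = substW (tt L) (EW tt (L+1) g (preW tt (L+(g+1)))) := rfl
    -- compute the take at level g+1
    have hsplit : WD tt (L+1) (g+1)
        = EW tt (L+1) g (preW tt (L+1+g)) ++ WD tt (L+1) g ++ EW tt (L+1) g (sufW tt (L+1+g)) :=
      WD_succ tt (L+1) g
    have haoff : aoff tt (L+1) (g+1) = (EW tt (L+1) g (preW tt (L+1+g))).length + aoff tt (L+1) g := rfl
    have htake : (WD tt (L+1) (g+1)).take (aoff tt (L+1) (g+1))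
        = EW tt (L+1) g (preW tt (L+1+g)) ++ (WD tt (L+1) g).take (aoff tt (L+1) g) := by
      rw [hsplit, haoff, append_assoc]
      rw [take_append]
      rw [take_of_length_le (by omega)]
      congr 1
      have e3 : (EW tt (L+1) g (preW tt (L+1+g))).length + aoff tt (L+1) g
          - (EW tt (L+1) g (preW tt (L+1+g))).length = aoff tt (L+1) g := by omega
      rw [e3]
      rw [take_append]
      have h4 : aoff tt (L+1) g - (WD tt (L+1) g).length = 0 := by
        have := aoff_lt tt (L+1) g; omega
      rw [h4]
      simp
    rw [htake, substW_append, length_append]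
    have e5 : L + 1 + g = L + (g + 1) := by omega
    rw [e5, e2]
    omega

end Stmt7
namespace Stmt7
open ABCD List

variable (tt : ℕ → Bool)

lemma substW_cons (t : Bool) (c : ABCD) (w : List ABCD) :
    substW t (c :: w) = phiW t c ++ substW t w := by simp [substW]

lemma substW_singleton (t : Bool) (c : ABCD) : substW t [c] = phiW t c := by
  simp [substW]

lemma key4 (L g : ℕ) : ∀ (k : ℤ), InR tt (L+1) g k →
    uu tt L k + (aoff tt L (g+1) : ℤ)
      = ((substW (tt L) ((WD tt (L+1) g).take (k + aoff tt (L+1) g).toNat)).length : ℤ) := by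
  intro k
  induction k using Int.induction_on with
  | zero =>
    intro _
    have e : ((0:ℤ) + (aoff tt (L+1) g : ℤ)).toNat = aoff tt (L+1) g := by omega
    rw [e, uu_zero, key1 tt g L]
    push_cast
    ring
  | succ i ih =>
    intro hk
    obtain ⟨hk1, hk2⟩ := hk
    have hki : InR tt (L+1) g (i:ℤ) := by constructor <;> omega
    have hlen : ((i:ℤ) + (aoff tt (L+1) g : ℤ)).toNat < (WD tt (L+1) g).length := by omega
    have e : ((i:ℤ) + 1 + (aoff tt (L+1) g : ℤ)).toNat
        = ((i:ℤ) + (aoff tt (L+1) g : ℤ)).toNat + 1 := by omega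
    rw [e, take_succ, getElem?_eq_getElem hlen]
    have hMM : (WD tt (L+1) g)[((i:ℤ) + (aoff tt (L+1) g : ℤ)).toNat] = MM tt (L+1) (i:ℤ) := by
      rw [MM_stable tt (L+1) g _ hki, getD_eq_getElem _ _ hlen]
    rw [substW_append, length_append]
    simp only [Option.toList_some, substW_singleton, hMM]
    have ihv := ih hki
    have husucc := uu_succ tt L (i:ℤ)
    push_cast at ihv husucc ⊢
    omega
  | pred i ih =>
    intro hk
    obtain ⟨hk1, hk2⟩ := hk
    have halt := aoff_lt tt (L+1) g
    have hki : InR tt (L+1) g (-(i:ℤ)) := by constructor <;> omega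
    have ihv := ih hki
    have hlen : ((-(i:ℤ) - 1) + (aoff tt (L+1) g : ℤ)).toNat < (WD tt (L+1) g).length := by
      omega
    have e : ((-(i:ℤ)) + (aoff tt (L+1) g : ℤ)).toNat
        = ((-(i:ℤ) - 1) + (aoff tt (L+1) g : ℤ)).toNat + 1 := by omega
    rw [e, take_succ, getElem?_eq_getElem hlen, substW_append, length_append] at ihv
    have hMM : (WD tt (L+1) g)[((-(i:ℤ) - 1) + (aoff tt (L+1) g : ℤ)).toNat]
        = MM tt (L+1) (-(i:ℤ) - 1) := by
      rw [MM_stable tt (L+1) g _ ⟨hk1, hk2⟩, getD_eq_getElem _ _ hlen]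
    simp only [Option.toList_some, substW_singleton, hMM] at ihv
    have husucc := uu_succ tt L (-(i:ℤ) - 1)
    have e2 : (-(i:ℤ) - 1) + 1 = -(i:ℤ) := by ring
    rw [e2] at husucc
    push_cast at ihv husucc ⊢
    omega

lemma WD_succ_subst (L g : ℕ) : WD tt L (g+1) = substW (tt L) (WD tt (L+1) g) := rfl

lemma list_decomp {α} (l : List α) (m : ℕ) (h : m < l.length) :
    l = l.take m ++ (l[m] :: l.drop (m+1)) := by
  conv_lhs => rw [← take_append_drop m l]
  congr 1
  exact drop_eq_getElem_cons h

lemma fits_MM (L : ℕ) : Fits (tt L) (MM tt (L+1)) (MM tt L) (uu tt L) := by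
  refine ⟨fun k => uu_succ tt L k, ?_⟩
  intro k j hj
  set g := 2 * (k.natAbs + 1) with hg
  have hk : InR tt (L+1) g k := InR_can tt (L+1) k
  have hid := key4 tt L g k hk
  set m := (k + (aoff tt (L+1) g : ℤ)).toNat with hm
  have hmlt : m < (WD tt (L+1) g).length := by obtain ⟨h1,h2⟩ := hk; omega
  have hMMk : (WD tt (L+1) g)[m] = MM tt (L+1) k := by
    rw [MM_stable tt (L+1) g k hk, getD_eq_getElem _ _ hmlt]
  have hsub : WD tt L (g+1)
      = substW (tt L) ((WD tt (L+1) g).take m)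
        ++ (phiW (tt L) (MM tt (L+1) k) ++ substW (tt L) ((WD tt (L+1) g).drop (m+1))) := by
    rw [WD_succ_subst]
    conv_lhs => rw [list_decomp (WD tt (L+1) g) m hmlt]
    rw [substW_append, substW_cons, hMMk]
  have hlentot : (WD tt L (g+1)).length
      = (substW (tt L) ((WD tt (L+1) g).take m)).length
        + ((phiW (tt L) (MM tt (L+1) k)).length
          + (substW (tt L) ((WD tt (L+1) g).drop (m+1))).length) := by
    rw [hsub]; simp [length_append]
  have hrange : InR tt L (g+1) (uu tt L k + (j:ℤ)) := by
    constructor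
    · omega
    · omega
  rw [MM_stable tt L (g+1) _ hrange]
  have eidx : (uu tt L k + (j:ℤ) + (aoff tt L (g+1) : ℤ)).toNat
      = (substW (tt L) ((WD tt (L+1) g).take m)).length + j := by omega
  rw [eidx, hsub]
  rw [getD_append_right _ _ _ _ (by omega)]
  have e2 : (substW (tt L) ((WD tt (L+1) g).take m)).length + j
      - (substW (tt L) ((WD tt (L+1) g).take m)).length = j := by omega
  rw [e2]
  exact getD_append _ _ _ _ hj

end Stmt7
namespace Stmt7
open ABCD List

lemma fits_mono {t : Bool} {y z : ℤ → ABCD} {u : ℤ → ℤ} (hf : Fits t y z u) :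
    StrictMono u :=
  strictMono_int_of_lt_succ (fun k => by
    have h := hf.1 k
    have h2 : 1 ≤ (phiW t (y k)).length := length_pos_iff.2 (phiW_ne_nil t (y k))
    omega)

lemma fits_shift {t : Bool} {y z : ℤ → ABCD} {u : ℤ → ℤ} (hf : Fits t y z u) (m : ℤ) :
    Fits t y (shiftZ m z) (fun k => u k - m) := by
  obtain ⟨h1, h2⟩ := hf
  constructor
  · intro k
    show u (k+1) - m = u k - m + _
    rw [h1 k]
    ring
  intro k j hj
  show z (u k - m + j + m) = _
  have e : u k - m + (j:ℤ) + m = u k + j := by ring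
  rw [e]
  exact h2 k j hj

lemma fits_isRecoding {t : Bool} {y z : ℤ → ABCD} {u : ℤ → ℤ} (hf : Fits t y z u)
    (halt : ∀ n : ℤ, sval (y n) ≠ sval (y (n+1))) :
    ∃ k₀ : ℤ, IsRecoding (fun i => lval (z i)) (shiftZ k₀ y) := by
  obtain ⟨hu, hcell⟩ := hf
  have hmono : StrictMono u := fits_mono ⟨hu, hcell⟩
  have hlt : ∀ K : ℤ, u K < u (K+1) := fun K => hmono (by omega)
  obtain ⟨k₀, hk1, hk2⟩ := exists_block hmono 0
  have hval : ∀ K : ℤ, ∀ i : ℤ, u K ≤ i → i < u (K+1) → lval (z i) = sval (y K) := by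
    intro K i h1 h2
    have hlen := hu K
    have hj : (i - u K).toNat < (phiW t (y K)).length := by omega
    have e : u K + ((i - u K).toNat : ℤ) = i := by omega
    have hc := hcell K (i - u K).toNat hj
    rw [e] at hc
    rw [hc]
    have hmem : (phiW t (y K)).getD (i - u K).toNat A ∈ phiW t (y K) := by
      rw [getD_eq_getElem _ _ hj]
      exact getElem_mem _
    exact lval_mem_phiW t (y K) _ hmem
  refine ⟨k₀, ⟨⟨fun k => u (k + k₀), ?_, ?_, ?_, ?_, ?_⟩, ?_⟩⟩
  · exact fun a b hab => hmono (by omega)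
  · simpa using hk1
  · have e : (1:ℤ) + k₀ = k₀ + 1 := by ring
    simp only [e]
    exact hk2
  · intro k i h1 h2
    have h1' : u (k + k₀) ≤ i := h1
    have h2' : i < u (k + 1 + k₀) := h2
    have e : k + 1 + k₀ = (k + k₀) + 1 := by ring
    rw [e] at h2'
    show lval (z i) = lval (z (u (k + k₀)))
    rw [hval (k+k₀) i h1' h2', hval (k+k₀) (u (k+k₀)) le_rfl (hlt _)]
  · intro k
    have e : k + 1 + k₀ = (k + k₀) + 1 := by ring
    simp only [e]
    rw [hval ((k+k₀)+1) (u ((k+k₀)+1)) le_rfl (hlt _),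
        hval (k+k₀) (u (k+k₀)) le_rfl (hlt _)]
    exact (halt (k+k₀)).symm
  · intro k
    constructor
    · exact hval (k+k₀) (u (k+k₀)) le_rfl (hlt _)
    · show u (k + 1 + k₀) - u (k + k₀) = (lval (shiftZ k₀ y k) : ℤ)
      have e : k + 1 + k₀ = (k+k₀)+1 := by ring
      rw [e, hu (k+k₀), phiW_length]
      show u (k+k₀) + (lval (y (k+k₀)) : ℤ) - u (k+k₀) = (lval (y (k+k₀)) : ℤ)
      ring

lemma recode_delta_of_fits {t : Bool} {y z : ℤ → ABCD} {u : ℤ → ℤ} (hf : Fits t y z u)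
    (halt : ∀ n : ℤ, sval (y n) ≠ sval (y (n+1))) :
    ∃ k₀ : ℤ, recode (fun i => lval (z i)) = shiftZ k₀ y
      ∧ delta (fun i => lval (z i)) = fun i => lval (shiftZ k₀ y i) := by
  obtain ⟨k₀, hr⟩ := fits_isRecoding hf halt
  exact ⟨k₀, recode_eq hr, delta_eq (isRecoding_isDelta hr)⟩

lemma hasType1_shift (m : ℤ) (y : ℤ → ABCD) : HasType1 (shiftZ m y) ↔ HasType1 y := by
  constructor
  · rintro ⟨i, h⟩
    refine ⟨i + m, ?_⟩
    have e1 : i + 1 + m = i + m + 1 := by ring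
    have e2 : i + 2 + m = i + m + 2 := by ring
    simp only [shiftZ] at h
    rwa [e1, e2] at h
  · rintro ⟨i, h⟩
    refine ⟨i - m, ?_⟩
    simp only [shiftZ]
    have e0 : i - m + m = i := by ring
    have e1 : i - m + 1 + m = i + 1 := by ring
    have e2 : i - m + 2 + m = i + 2 := by ring
    rwa [e0, e1, e2]

variable (tt : ℕ → Bool)

lemma MM_exists_sval3 (L : ℕ) : ∃ i : ℤ, sval (MM tt L i) = 3 := by
  have h := MM_alt tt L 0
  rcases sval_cases (MM tt L (0+1)) with h1 | h1
  · rcases sval_cases (MM tt L 0) with h0 | h0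
    · exact absurd (h0.trans h1.symm) h
    · exact ⟨0, h0⟩
  · exact ⟨0+1, h1⟩

lemma MM_exists_CD (L : ℕ) : ∃ i : ℤ, MM tt L i = C ∨ MM tt L i = D := by
  obtain ⟨i, hi⟩ := MM_exists_sval3 tt (L+1)
  obtain ⟨hu, hcell⟩ := fits_MM tt L
  have hBD : MM tt (L+1) i = B ∨ MM tt (L+1) i = D := by
    cases hM : MM tt (L+1) i <;> rw [hM] at hi <;> simp [sval] at hi <;> simp
  have h0 := hcell i 0 (List.length_pos_iff.2 (phiW_ne_nil (tt L) (MM tt (L+1) i)))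
  refine ⟨uu tt L i + ((0:ℕ):ℤ), ?_⟩
  rcases hBD with hB | hB <;> cases htL : tt L <;> rw [hB, htL] at h0 <;>
    simp [phiW] at h0 <;> simp [h0]

lemma hasType1_MM_true (L : ℕ) (h : tt L = true) : HasType1 (MM tt L) := by
  obtain ⟨i, hi⟩ := MM_exists_CD tt (L+1)
  obtain ⟨hu, hcell⟩ := fits_MM tt L
  have hlen : (phiW (tt L) (MM tt (L+1) i)).length = 3 := by
    rcases hi with h' | h' <;> rw [h', h] <;> rfl
  have h0 := hcell i 0 (by omega)
  have h1 := hcell i 1 (by omega)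
  have h2 := hcell i 2 (by omega)
  refine ⟨uu tt L i, ?_⟩
  have e0 : uu tt L i + ((0:ℕ):ℤ) = uu tt L i := by norm_num
  have e1 : uu tt L i + ((1:ℕ):ℤ) = uu tt L i + 1 := by norm_num
  have e2 : uu tt L i + ((2:ℕ):ℤ) = uu tt L i + 2 := by norm_num
  rw [e0] at h0
  rw [e1] at h1
  rw [e2] at h2
  rcases hi with h' | h' <;> rw [h', h] at h0 h1 h2 <;>
    simp [phiW] at h0 h1 h2
  · exact Or.inl ⟨h0, h1, h2⟩
  · exact Or.inr ⟨h0, h1, h2⟩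

lemma getD_false_eq_B {c : ABCD} {j : ℕ} (hj : j < (phiW false c).length)
    (hB : (phiW false c).getD j A = B) : c = C ∧ j = 1 := by
  cases c <;> rcases j with _|_|_|j <;> simp_all [phiW] <;> omega

lemma getD_false_eq_C {c : ABCD} {j : ℕ} (hj : j < (phiW false c).length)
    (hC : (phiW false c).getD j A = C) : c = D ∧ j = 1 := by
  cases c <;> rcases j with _|_|_|j <;> simp_all [phiW] <;> omega

lemma first_false_ne (c : ABCD) :
    (phiW false c).getD 0 A ≠ B ∧ (phiW false c).getD 0 A ≠ C := by
  cases c <;> simp [phiW]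

lemma not_hasType1_MM_false (L : ℕ) (h : tt L = false) : ¬ HasType1 (MM tt L) := by
  rintro ⟨i, hcase⟩
  obtain ⟨hu, hcell⟩ := fits_MM tt L
  have hmono : StrictMono (uu tt L) := fits_mono ⟨hu, hcell⟩
  obtain ⟨k, hk1, hk2⟩ := exists_block hmono i
  have hlen := hu k
  obtain ⟨j, hjlt, hij⟩ : ∃ j : ℕ, j < (phiW (tt L) (MM tt (L+1) k)).length
      ∧ uu tt L k + (j:ℤ) = i := ⟨(i - uu tt L k).toNat, by omega, by omega⟩
  have h0 := hcell k j hjlt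
  rw [hij] at h0
  have hnext : uu tt L (k+1) = uu tt L k + (phiW (tt L) (MM tt (L+1) k)).length := hu k
  have hfirst : ∀ k' : ℤ, MM tt L (uu tt L k')
      = (phiW false (MM tt (L+1) k')).getD 0 A := by
    intro k'
    have hc := hcell k' 0 (List.length_pos_iff.2 (phiW_ne_nil _ _))
    have e : uu tt L k' + ((0:ℕ):ℤ) = uu tt L k' := by norm_num
    rw [e] at hc
    rwa [h] at hc
  rw [h] at h0 hjlt hnext
  rcases hcase with ⟨hB1, hB2, hB3⟩ | ⟨hC1, hC2, hC3⟩
  · have hgB : (phiW false (MM tt (L+1) k)).getD j A = B := by rw [← h0]; exact hB1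
    obtain ⟨hC, hj1⟩ := getD_false_eq_B hjlt hgB
    have hi2 : i + 2 = uu tt L (k+1) := by
      rw [hnext, hC]
      simp only [phiW, List.length_cons, List.length_nil]
      omega
    rw [hi2, hfirst (k+1)] at hB3
    exact (first_false_ne (MM tt (L+1) (k+1))).1 hB3
  · have hgC : (phiW false (MM tt (L+1) k)).getD j A = C := by rw [← h0]; exact hC1
    obtain ⟨hD, hj1⟩ := getD_false_eq_C hjlt hgC
    have hi2 : i + 2 = uu tt L (k+1) := by
      rw [hnext, hD]
      simp only [phiW, List.length_cons, List.length_nil]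
      omega
    rw [hi2, hfirst (k+1)] at hC3
    exact (first_false_ne (MM tt (L+1) (k+1))).2 hC3

end Stmt7
/-- Nonemptiness of `Y_τ`.
For every `τ ∈ {0,1}^ℕ`, the set `Y_τ` is nonempty. -/
theorem stmt7 (τ : ℕ → Bool) : (Yset τ).Nonempty := by
  classical
  set tt : ℕ → Bool := fun n => Nat.casesOn n false τ with htt
  set x : ℤ → ℕ := fun i => lval (Stmt7.MM tt 0 i) with hx
  have main : ∀ n : ℕ, ∃ m : ℤ,
      delta^[n] x = fun i => lval (shiftZ m (Stmt7.MM tt n) i) := by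
    intro n
    induction n with
    | zero =>
      refine ⟨0, ?_⟩
      funext i
      simp only [Function.iterate_zero_apply, hx, shiftZ, add_zero]
    | succ n ih =>
      obtain ⟨m, hm⟩ := ih
      have hf := Stmt7.fits_shift (Stmt7.fits_MM tt n) m
      obtain ⟨k₀, hrec, hdel⟩ := Stmt7.recode_delta_of_fits hf (Stmt7.MM_alt tt (n+1))
      refine ⟨k₀, ?_⟩
      rw [Function.iterate_succ_apply', hm]
      exact hdel
  have hsm : SmoothSeq x := by
    intro n i
    obtain ⟨m, hm⟩ := main n
    rw [hm]
    exact Stmt7.lval_cases _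
  have hty : TypesX x = τ := by
    funext n
    obtain ⟨m, hm⟩ := main n
    have hf := Stmt7.fits_shift (Stmt7.fits_MM tt n) m
    obtain ⟨k₀, hrec, hdel⟩ := Stmt7.recode_delta_of_fits hf (Stmt7.MM_alt tt (n+1))
    show typeOf (recode (delta^[n] x)) = τ n
    rw [hm, hrec]
    have hinv := Stmt7.hasType1_shift k₀ (Stmt7.MM tt (n+1))
    have htt1 : tt (n+1) = τ n := rfl
    cases hτ : τ n
    · have hnot := Stmt7.not_hasType1_MM_false tt (n+1) (by rw [htt1, hτ])
      simp only [typeOf, decide_eq_false_iff_not]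
      exact fun hh => hnot (hinv.1 hh)
    · have hyes := Stmt7.hasType1_MM_true tt (n+1) (by rw [htt1, hτ])
      simp only [typeOf, decide_eq_true_eq]
      exact hinv.2 hyes
  exact ⟨recode x, x, ⟨hsm, hty⟩, rfl⟩
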